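/- Let U ⊆ ℂ be a connected open set, let A₀,…,A₄ : U → ℂ be continuous with A₄ nowhere vanishing on U, and let Σ be an antisymmetric complex 4×4 matrix. Let Π : U → ℂ⁴ be a map whose four components are holomorphic on U and each satisfy the fourth-order linear ODE Σ_{k=0}^{4} A_k(z)·y^{(k)}(z) = 0. Assume that Π(z)ᵀ Σ Π^{(k)}(z) = 0 for all z ∈ U and for k = 0, 1, 2 (derivatives taken componentwise with respect to z). Then the holomorphic function C(z) := Π(z)ᵀ Σ Π'''(z) satisfies the first-order ODE C'(z) = −(A₃(z)/(2·A₄(z)))·C(z) for all z ∈ U. -/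

import Mathlib

open Complex

/-- Let `U ⊆ ℂ` be a connected open set, `A₀,…,A₄ : U → ℂ` continuous with
`A₄` nowhere vanishing on `U`, and `Σ` an antisymmetric complex `4×4` matrix.  Let `Π : U → ℂ⁴`
have holomorphic components, each satisfying `∑_{k=0}^4 A_k(z)·y^{(k)}(z) = 0`.  If
`Π(z)ᵀ Σ Π^{(k)}(z) = 0` on `U` for `k = 0, 1, 2`, then `C(z) := Π(z)ᵀ Σ Π'''(z)` satisfies
`C'(z) = −(A₃(z)/(2·A₄(z)))·C(z)` on `U`. -/
theorem yukawa_first_order_ode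
    (U : Set ℂ) (hUopen : IsOpen U) (hUconn : IsConnected U)
    (A : Fin 5 → ℂ → ℂ) (hAcont : ∀ k, ContinuousOn (A k) U)
    (hA4 : ∀ z ∈ U, A 4 z ≠ 0)
    (S : Matrix (Fin 4) (Fin 4) ℂ) (hS : S.transpose = -S)
    (P : ℂ → Fin 4 → ℂ)
    (hP : ∀ i, DifferentiableOn ℂ (fun z => P z i) U)
    (hODE : ∀ i, ∀ z ∈ U,
      ∑ k : Fin 5, A k z * iteratedDeriv (k : ℕ) (fun w => P w i) z = 0)
    (hPair : ∀ k : ℕ, k ≤ 2 → ∀ z ∈ U,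
      ∑ i, ∑ j, P z i * S i j * iteratedDeriv k (fun w => P w j) z = 0) :
    ∀ z ∈ U,
      HasDerivAt (fun w => ∑ i, ∑ j, P w i * S i j * iteratedDeriv 3 (fun v => P v j) w)
        (-(A 3 z / (2 * A 4 z)) *
          ∑ i, ∑ j, P z i * S i j * iteratedDeriv 3 (fun v => P v j) z) z := by
  classical
  set f : Fin 4 → ℂ → ℂ := fun i w => P w i with hf
  -- analyticity of all iterated derivatives
  have han : ∀ (n : ℕ) (i : Fin 4), AnalyticOnNhd ℂ (iteratedDeriv n (f i)) U := by
    intro n i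
    induction n with
    | zero => simpa [iteratedDeriv_zero] using (hP i).analyticOnNhd hUopen
    | succ n ih => rw [iteratedDeriv_succ]; exact ih.deriv
  have hD : ∀ (n : ℕ) (i : Fin 4) (w : ℂ), w ∈ U →
      HasDerivAt (iteratedDeriv n (f i)) (iteratedDeriv (n+1) (f i) w) w := by
    intro n i w hw
    rw [iteratedDeriv_succ]
    exact ((han n i w hw).differentiableAt).hasDerivAt
  set F : ℕ → ℕ → ℂ → ℂ := fun a b z =>
    ∑ i, ∑ j, iteratedDeriv a (f i) z * S i j * iteratedDeriv b (f j) z with hFdef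
  -- derivative of F a b
  have hF' : ∀ (a b : ℕ) (w : ℂ), w ∈ U →
      HasDerivAt (F a b) (F (a+1) b w + F a (b+1) w) w := by
    intro a b w hw
    have h : HasDerivAt (F a b)
        (∑ i, ∑ j, (iteratedDeriv (a+1) (f i) w * S i j * iteratedDeriv b (f j) w +
          iteratedDeriv a (f i) w * S i j * iteratedDeriv (b+1) (f j) w)) w := by
      apply HasDerivAt.fun_sum
      intro i _
      apply HasDerivAt.fun_sum
      intro j _
      have h1 := ((hD a i w hw).mul_const (S i j)).mul (hD b j w hw)
      exact h1
    have e : (∑ i : Fin 4, ∑ j : Fin 4,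
        (iteratedDeriv (a+1) (f i) w * S i j * iteratedDeriv b (f j) w +
         iteratedDeriv a (f i) w * S i j * iteratedDeriv (b+1) (f j) w))
        = F (a+1) b w + F a (b+1) w := by
      simp only [hFdef, Finset.sum_add_distrib]
    exact e ▸ h
  -- antisymmetry
  have hSij : ∀ i j, S j i = - S i j := by
    intro i j
    have := congrFun (congrFun hS i) j
    simpa [Matrix.transpose_apply] using this
  have hanti : ∀ (a b : ℕ) (w : ℂ), F a b w = - F b a w := by
    intro a b w
    rw [eq_neg_iff_add_eq_zero]
    simp only [hFdef]
    rw [show (∑ i, ∑ j, iteratedDeriv a (f i) w * S i j * iteratedDeriv b (f j) w)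
        = ∑ j, ∑ i, iteratedDeriv a (f i) w * S i j * iteratedDeriv b (f j) w
      from Finset.sum_comm]
    rw [← Finset.sum_add_distrib]
    apply Finset.sum_eq_zero
    intro i _
    rw [← Finset.sum_add_distrib]
    apply Finset.sum_eq_zero
    intro j _
    rw [hSij i j]
    ring
  have hFkk : ∀ (a : ℕ) (w : ℂ), F a a w = 0 := by
    intro a w
    linear_combination (1/2 : ℂ) * hanti a a w
  -- given pairings: F 0 k = 0 on U for k ≤ 2
  have h0 : ∀ k : ℕ, k ≤ 2 → ∀ w ∈ U, F 0 k w = 0 := by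
    intro k hk w hw
    have := hPair k hk w hw
    simpa [hFdef, hf, iteratedDeriv_zero] using this
  -- F 1 2 = - F 0 3 on U
  have h12 : ∀ w ∈ U, F 1 2 w = - F 0 3 w := by
    intro w hw
    have h1 : HasDerivAt (F 0 2) (F 1 2 w + F 0 3 w) w := hF' 0 2 w hw
    have h2 : F 0 2 =ᶠ[nhds w] (fun _ => (0:ℂ)) := by
      filter_upwards [hUopen.mem_nhds hw] with x hx using h0 2 le_rfl x hx
    have h3 : HasDerivAt (fun _ : ℂ => (0:ℂ)) (F 1 2 w + F 0 3 w) w :=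
      h1.congr_of_eventuallyEq h2.symm
    have h4 : F 1 2 w + F 0 3 w = 0 := h3.unique (hasDerivAt_const w 0)
    exact eq_neg_of_add_eq_zero_left h4
  intro z hz
  -- differentiate F 1 2 = -F 0 3 at z
  have h5 : HasDerivAt (F 1 2) (F 2 2 z + F 1 3 z) z := hF' 1 2 z hz
  have h6 : F 1 2 =ᶠ[nhds z] (fun w => - F 0 3 w) := by
    filter_upwards [hUopen.mem_nhds hz] with x hx using h12 x hx
  have h7 : HasDerivAt (fun w => - F 0 3 w) (F 2 2 z + F 1 3 z) z :=
    h5.congr_of_eventuallyEq h6.symm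
  have h8 : HasDerivAt (fun w => - F 0 3 w) (-(F 1 3 z + F 0 4 z)) z :=
    (hF' 0 3 z hz).neg
  have h9 : F 2 2 z + F 1 3 z = -(F 1 3 z + F 0 4 z) := h7.unique h8
  have h22 : F 2 2 z = 0 := hFkk 2 z
  have hF13 : F 1 3 z = - F 0 4 z / 2 := by
    linear_combination (1/2 : ℂ) * h9 - (1/2 : ℂ) * h22
  -- use the ODE to compute F 0 4
  have hODE' : ∀ j : Fin 4, A 0 z * iteratedDeriv 0 (f j) z + A 1 z * iteratedDeriv 1 (f j) z
      + A 2 z * iteratedDeriv 2 (f j) z + A 3 z * iteratedDeriv 3 (f j) z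
      + A 4 z * iteratedDeriv 4 (f j) z = 0 := by
    intro j
    have h := hODE j z hz
    rw [Fin.sum_univ_five] at h
    have e0 : ((0 : Fin 5) : ℕ) = 0 := rfl
    have e1 : ((1 : Fin 5) : ℕ) = 1 := rfl
    have e2 : ((2 : Fin 5) : ℕ) = 2 := rfl
    have e3 : ((3 : Fin 5) : ℕ) = 3 := rfl
    have e4 : ((4 : Fin 5) : ℕ) = 4 := rfl
    rw [e0, e1, e2, e3, e4] at h
    linear_combination h
  have key : A 0 z * F 0 0 z + A 1 z * F 0 1 z + A 2 z * F 0 2 z + A 3 z * F 0 3 z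
      + A 4 z * F 0 4 z = 0 := by
    simp only [hFdef, Finset.mul_sum, ← Finset.sum_add_distrib]
    apply Finset.sum_eq_zero
    intro i _
    apply Finset.sum_eq_zero
    intro j _
    linear_combination (iteratedDeriv 0 (f i) z * S i j) * hODE' j
  have h00 := h0 0 (by norm_num) z hz
  have h01 := h0 1 (by norm_num) z hz
  have h02 := h0 2 (by norm_num) z hz
  have hA4z : A 4 z ≠ 0 := hA4 z hz
  have hval : F 1 3 z + F 0 4 z = -(A 3 z / (2 * A 4 z)) * F 0 3 z := by
    have hA4F04 : A 4 z * F 0 4 z = -(A 3 z * F 0 3 z) := by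
      linear_combination key - A 0 z * h00 - A 1 z * h01 - A 2 z * h02
    have e1 : -(A 3 z / (2 * A 4 z)) * F 0 3 z = (A 4 z * F 0 4 z) / (A 4 z * 2) := by
      rw [hA4F04]; ring
    rw [hF13, e1, mul_div_mul_left _ _ hA4z]
    ring
  have hC : HasDerivAt (F 0 3) (F 1 3 z + F 0 4 z) z := hF' 0 3 z hz
  have hfun : (fun w => ∑ i, ∑ j, P w i * S i j * iteratedDeriv 3 (fun v => P v j) w)
      = F 0 3 := by
    funext w
    simp [hFdef, hf, iteratedDeriv_zero]
  have hz3 : (∑ i, ∑ j, P z i * S i j * iteratedDeriv 3 (fun v => P v j) z) = F 0 3 z := by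
    simp [hFdef, hf, iteratedDeriv_zero]
  rw [hfun, hz3, ← hval]
  exact hC
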